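/- Let n ≥ 3 and let f = (f_0, …, f_n) be given by f_k = a_0^{n−k} b_0^k + a_1^{n−k} b_1^k, where v_0 = (a_0, b_0) and v_1 = (a_1, b_1) are linearly independent vectors in ℂ². Then f ∈ 𝒜₃ if and only if there exist ε ∈ {1, −1} and r ∈ {0,1,2,3} such that a_1·(√2·a_0 + ε·i·b_0) = b_1·(ε·i·a_0 − √2·b_0), a_1^n = i^r·(ε·i·a_0 − √2·b_0)^n, and b_1^n = i^r·(√2·a_0 + ε·i·b_0)^n. -/

import Mathlib

/-- `α = (1 + i)/√2`, a primitive 8th root of unity with `α² = i`. -/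
noncomputable def alpha : ℂ := (1 + Complex.I) / (Real.sqrt 2 : ℂ)

/-- `f ∈ 𝒜₃`: there exist `H ∈ O₂(ℂ)`, a nonzero `c ∈ ℂ`, and `r ∈ {0,1,2,3}` such that
`f = c ((H(1,α))^{⊗n} + i^r (H(1,-α))^{⊗n})`. -/
def MemA3 (n : ℕ) (f : ℕ → ℂ) : Prop :=
  ∃ (H : Matrix (Fin 2) (Fin 2) ℂ) (c : ℂ) (r : ℕ),
    H.transpose * H = 1 ∧ c ≠ 0 ∧ r ≤ 3 ∧
    ∀ k ≤ n, f k =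
      c * (H.mulVec ![1, alpha] 0 ^ (n - k) * H.mulVec ![1, alpha] 1 ^ k +
        Complex.I ^ r *
          (H.mulVec ![1, -alpha] 0 ^ (n - k) * H.mulVec ![1, -alpha] 1 ^ k))

lemma s2_sq : ((Real.sqrt 2 : ℝ) : ℂ)^2 = 2 := by
  norm_cast
  rw [Real.sq_sqrt] ; norm_num

lemma s2_ne : ((Real.sqrt 2 : ℝ) : ℂ) ≠ 0 :=
  Complex.ofReal_ne_zero.mpr (by positivity)

lemma alpha_mul_s2 : ((Real.sqrt 2 : ℝ) : ℂ) * alpha = 1 + Complex.I := by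
  rw [alpha]; field_simp

lemma alpha_ne : alpha ≠ 0 := by
  rw [alpha]
  apply div_ne_zero _ s2_ne
  intro h
  have := congrArg Complex.im h
  simp at this

lemma alpha_sq : alpha^2 = Complex.I := by
  rw [alpha, div_pow, s2_sq]
  have h : (1+Complex.I)^2 = 2*Complex.I := by linear_combination Complex.I_sq
  rw [h]; ring

lemma I_alpha : Complex.I * alpha + ((Real.sqrt 2 : ℝ) : ℂ) = alpha := by
  have h1 := alpha_mul_s2
  have h2 := s2_sq
  linear_combination ((1 - Complex.I)/2) * (alpha * h2 - ((Real.sqrt 2 : ℝ) : ℂ) * h1) + (((Real.sqrt 2 : ℝ) : ℂ)/2) * Complex.I_sq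

lemma I_pow_mod (m : ℕ) : Complex.I ^ (m % 4) = Complex.I ^ m := by
  conv_rhs => rw [← Nat.div_add_mod m 4, pow_add, pow_mul, Complex.I_pow_four, one_pow, one_mul]

lemma par (x1 x2 y1 y2 : ℂ) (h : x1*y2 - y1*x2 = 0) (hx : ¬(x1 = 0 ∧ x2 = 0)) :
    ∃ t, y1 = t*x1 ∧ y2 = t*x2 := by
  by_cases h1 : x1 = 0
  · have h2 : x2 ≠ 0 := fun h2 => hx ⟨h1, h2⟩
    refine ⟨y2/x2, ?_, by field_simp⟩
    have hy1 : y1 * x2 = 0 := by rw [h1] at h; linear_combination -h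
    rcases mul_eq_zero.mp hy1 with h'|h'
    · rw [h', h1, mul_zero]
    · exact absurd h' h2
  · refine ⟨y1/x1, by field_simp, ?_⟩
    field_simp
    linear_combination h

lemma det_ne (a₀ b₀ a₁ b₁ : ℂ) (h : LinearIndependent ℂ ![(a₀,b₀),(a₁,b₁)]) :
    a₀*b₁ - a₁*b₀ ≠ 0 := by
  rw [LinearIndependent.pair_iff] at h
  intro hd
  by_cases hb : b₁ = 0 ∧ b₀ = 0
  · have h2 := h a₁ (-a₀) (by
      apply Prod.ext <;> simp [hb.1, hb.2] <;> ring)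
    have ha₀ : a₀ = 0 := by have := h2.2; simpa using this
    have ha₁ : a₁ = 0 := h2.1
    have := h 1 0 (by apply Prod.ext <;> simp [ha₀, ha₁, hb.1, hb.2])
    exact one_ne_zero this.1
  · have h2 := h b₁ (-b₀) (by
      apply Prod.ext
      · simp; linear_combination hd
      · simp; ring)
    apply hb
    refine ⟨h2.1, ?_⟩
    have := h2.2; simpa using this


lemma ind1 (N : ℕ) (A B cc : ℂ) (hnz : ¬(A = 0 ∧ B = 0))
    (h : ∀ j k : ℕ, j + k = N → cc * (A ^ j * B ^ k) = 0) : cc = 0 := by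
  by_cases hA : A = 0
  · have hB : B ≠ 0 := fun hB => hnz ⟨hA, hB⟩
    have := h 0 N (by omega)
    simpa [pow_ne_zero _ hB] using this
  · have := h N 0 (by omega)
    simpa [pow_ne_zero _ hA] using this

lemma ind2 (N : ℕ) (hN : 1 ≤ N) (A0 B0 A1 B1 c0 c1 : ℂ)
    (h01 : A0 * B1 - A1 * B0 ≠ 0)
    (h : ∀ j k : ℕ, j + k = N → c0 * (A0 ^ j * B0 ^ k) + c1 * (A1 ^ j * B1 ^ k) = 0) :
    c0 = 0 ∧ c1 = 0 := by
  have hnz0 : ¬(A0 = 0 ∧ B0 = 0) := by rintro ⟨h1, h2⟩; apply h01; rw [h1, h2]; ring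
  have hnz1 : ¬(A1 = 0 ∧ B1 = 0) := by rintro ⟨h1, h2⟩; apply h01; rw [h1, h2]; ring
  have hc0 : c0 * (A0*B1 - A1*B0) = 0 := by
    apply ind1 (N-1) A0 B0 _ hnz0
    intro j k hjk
    have e1 := h (j+1) k (by omega)
    have e2 := h j (k+1) (by omega)
    linear_combination B1 * e1 - A1 * e2
  have c0z : c0 = 0 := by
    rcases mul_eq_zero.mp hc0 with h'|h'
    · exact h'
    · exact absurd h' h01
  refine ⟨c0z, ?_⟩
  apply ind1 N A1 B1 _ hnz1
  intro j k hjk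
  have := h j k hjk
  rw [c0z] at this
  linear_combination this

lemma ind3 (N : ℕ) (hN : 2 ≤ N) (A0 B0 A1 B1 A2 B2 c0 c1 c2 : ℂ)
    (h01 : A0 * B1 - A1 * B0 ≠ 0)
    (h02 : A0 * B2 - A2 * B0 ≠ 0)
    (h12 : A1 * B2 - A2 * B1 ≠ 0)
    (h : ∀ j k : ℕ, j + k = N → c0 * (A0 ^ j * B0 ^ k) + c1 * (A1 ^ j * B1 ^ k)
        + c2 * (A2 ^ j * B2 ^ k) = 0) :
    c0 = 0 ∧ c1 = 0 ∧ c2 = 0 := by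
  have hnz2 : ¬(A2 = 0 ∧ B2 = 0) := by rintro ⟨h1, h2⟩; apply h02; rw [h1, h2]; ring
  have key : c0 * (A0*B2 - A2*B0) = 0 ∧ c1 * (A1*B2 - A2*B1) = 0 := by
    apply ind2 (N-1) (by omega)
    · exact h01
    · intro j k hjk
      have e1 := h (j+1) k (by omega)
      have e2 := h j (k+1) (by omega)
      linear_combination B2 * e1 - A2 * e2
  have c0z : c0 = 0 := by
    rcases mul_eq_zero.mp key.1 with h'|h'
    · exact h'
    · exact absurd h' h02
  have c1z : c1 = 0 := by
    rcases mul_eq_zero.mp key.2 with h'|h'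
    · exact h'
    · exact absurd h' h12
  refine ⟨c0z, c1z, ?_⟩
  apply ind1 N A2 B2 _ hnz2
  intro j k hjk
  have := h j k hjk
  rw [c0z, c1z] at this
  linear_combination this

lemma ind4 (N : ℕ) (hN : 3 ≤ N) (A0 B0 A1 B1 A2 B2 A3 B3 c0 c1 c2 c3 : ℂ)
    (h01 : A0 * B1 - A1 * B0 ≠ 0)
    (h02 : A0 * B2 - A2 * B0 ≠ 0)
    (h03 : A0 * B3 - A3 * B0 ≠ 0)
    (h12 : A1 * B2 - A2 * B1 ≠ 0)
    (h13 : A1 * B3 - A3 * B1 ≠ 0)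
    (h23 : A2 * B3 - A3 * B2 ≠ 0)
    (h : ∀ j k : ℕ, j + k = N → c0 * (A0 ^ j * B0 ^ k) + c1 * (A1 ^ j * B1 ^ k)
        + c2 * (A2 ^ j * B2 ^ k) + c3 * (A3 ^ j * B3 ^ k) = 0) :
    c0 = 0 ∧ c1 = 0 ∧ c2 = 0 ∧ c3 = 0 := by
  have hnz3 : ¬(A3 = 0 ∧ B3 = 0) := by rintro ⟨h1, h2⟩; apply h03; rw [h1, h2]; ring
  have key : c0 * (A0*B3 - A3*B0) = 0 ∧ c1 * (A1*B3 - A3*B1) = 0 ∧ c2 * (A2*B3 - A3*B2) = 0 := by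
    apply ind3 (N-1) (by omega)
    · exact h01
    · exact h02
    · exact h12
    · intro j k hjk
      have e1 := h (j+1) k (by omega)
      have e2 := h j (k+1) (by omega)
      linear_combination B3 * e1 - A3 * e2
  have c0z : c0 = 0 := by
    rcases mul_eq_zero.mp key.1 with h'|h'
    · exact h'
    · exact absurd h' h03
  have c1z : c1 = 0 := by
    rcases mul_eq_zero.mp key.2.1 with h'|h'
    · exact h'
    · exact absurd h' h13
  have c2z : c2 = 0 := by
    rcases mul_eq_zero.mp key.2.2 with h'|h'
    · exact h'
    · exact absurd h' h23
  refine ⟨c0z, c1z, c2z, ?_⟩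
  apply ind1 N A3 B3 _ hnz3
  intro j k hjk
  have := h j k hjk
  rw [c0z, c1z, c2z] at this
  linear_combination this

lemma backward (n : ℕ) (hn : 3 ≤ n) (a₀ b₀ a₁ b₁ : ℂ)
    (hdv : a₀*b₁ - a₁*b₀ ≠ 0) (f : ℕ → ℂ)
    (hf : ∀ k ≤ n, f k = a₀ ^ (n - k) * b₀ ^ k + a₁ ^ (n - k) * b₁ ^ k)
    (ε : ℂ) (r : ℕ) (hε : ε = 1 ∨ ε = -1) (hr : r ≤ 3)
    (e1 : a₁ * ((Real.sqrt 2 : ℂ) * a₀ + ε * Complex.I * b₀) =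
          b₁ * (ε * Complex.I * a₀ - (Real.sqrt 2 : ℂ) * b₀))
    (e2 : a₁ ^ n = Complex.I ^ r * (ε * Complex.I * a₀ - (Real.sqrt 2 : ℂ) * b₀) ^ n)
    (e3 : b₁ ^ n = Complex.I ^ r * ((Real.sqrt 2 : ℂ) * a₀ + ε * Complex.I * b₀) ^ n) :
    MemA3 n f := by
  have hs2 := s2_sq
  have hα := alpha_sq
  have hsa := alpha_mul_s2
  have hI := Complex.I_sq
  have hε2 : ε^2 = 1 := by rcases hε with rfl|rfl <;> norm_num
  set s2 : ℂ := ((Real.sqrt 2 : ℝ) : ℂ) with hs2def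
  set p : ℂ := ε * Complex.I * a₀ - s2 * b₀ with hpdef
  set q : ℂ := s2 * a₀ + ε * Complex.I * b₀ with hqdef
  have hA : ε*Complex.I*p + s2*q = a₀ := by
    rw [hpdef, hqdef]
    linear_combination (Complex.I^2*a₀)*hε2 + a₀*hI + a₀*hs2
  have hB : -(s2*p) + ε*Complex.I*q = b₀ := by
    rw [hpdef, hqdef]
    linear_combination (Complex.I^2*b₀)*hε2 + b₀*hI + b₀*hs2
  have hpq : ¬(p = 0 ∧ q = 0) := by
    rintro ⟨h1, h2⟩
    rw [h1, h2] at hA hB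
    apply hdv
    simp at hA hB
    rw [← hA, ← hB]; ring
  have hD : a₀*q - b₀*p = s2*(a₀^2+b₀^2) := by
    rw [hpdef, hqdef]; ring
  have hQ : a₀^2 + b₀^2 ≠ 0 := by
    intro h0
    apply hdv
    have h1 : (a₀*b₁ - a₁*b₀) * p = 0 := by
      linear_combination (-a₀)*e1 + a₁*hD + a₁*s2*h0
    have h2 : (a₀*b₁ - a₁*b₀) * q = 0 := by
      linear_combination (-b₀)*e1 + b₁*hD + b₁*s2*h0
    rcases mul_eq_zero.mp h1 with h'|hp0
    · exact h'
    rcases mul_eq_zero.mp h2 with h'|hq0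
    · exact h'
    exact absurd ⟨hp0, hq0⟩ hpq
  obtain ⟨ζ, hζ1, hζ2⟩ := par p q a₁ b₁ (by linear_combination -e1) hpq
  have hζn : ζ^n = Complex.I^r := by
    by_cases hp0 : p = 0
    · have hq0 : q ≠ 0 := fun h => hpq ⟨hp0, h⟩
      rw [hζ2] at e3
      have h2 : ζ^n * q^n = Complex.I^r * q^n := by rw [← mul_pow]; exact e3
      exact mul_right_cancel₀ (pow_ne_zero _ hq0) h2
    · rw [hζ1] at e2
      have h2 : ζ^n * p^n = Complex.I^r * p^n := by rw [← mul_pow]; exact e2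
      exact mul_right_cancel₀ (pow_ne_zero _ hp0) h2
  have h1I : (1:ℂ) + Complex.I ≠ 0 := by
    intro h; have := congrArg Complex.im h; simp at this
  obtain ⟨s₀, hs₀⟩ := IsAlgClosed.exists_pow_nat_eq ((a₀^2+b₀^2)/(1+Complex.I)) (show 0 < 2 by norm_num)
  have hs₀' : s₀^2 * (1+Complex.I) = a₀^2 + b₀^2 := by rw [hs₀]; field_simp
  have hs₀0 : s₀ ≠ 0 := by
    intro h; rw [h] at hs₀'; apply hQ; rw [← hs₀']; ring
  have hC : p^2 + q^2 = a₀^2 + b₀^2 := by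
    rw [hpdef, hqdef]
    linear_combination (Complex.I^2*(a₀^2+b₀^2))*hε2 + (a₀^2+b₀^2)*hI + (a₀^2+b₀^2)*hs2
  have hE : a₀*p + b₀*q = ε*Complex.I*(a₀^2+b₀^2) := by
    rw [hpdef, hqdef]; ring
  set u0 : ℂ := a₀/s₀ with hu0
  set u1 : ℂ := b₀/s₀ with hu1
  set v0 : ℂ := -ε*p/s₀ with hv0
  set v1 : ℂ := -ε*q/s₀ with hv1
  have g1 : u0^2 + u1^2 = 1 + Complex.I := by
    rw [hu0, hu1]; field_simp; linear_combination -hs₀'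
  have g2 : v0^2 + v1^2 = 1 + Complex.I := by
    rw [hv0, hv1]; field_simp
    linear_combination (p^2+q^2)*hε2 + hC - hs₀'
  have g3 : u0*v0 + u1*v1 = 1 - Complex.I := by
    rw [hu0, hu1, hv0, hv1]; field_simp
    linear_combination (-ε)*hE + (-(Complex.I)*(a₀^2+b₀^2))*hε2 + Complex.I*hs₀' - s₀^2*hI
  obtain ⟨r', hr', hIr⟩ : ∃ r', r' ≤ 3 ∧ Complex.I^r' * (-ε)^n = Complex.I^r := by
    rcases (show (-ε)^n = 1 ∨ (-ε)^n = -1 by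
      rcases hε with rfl|rfl
      · rcases Nat.even_or_odd n with h|h
        · left; simpa using h.neg_one_pow
        · right; simpa using h.neg_one_pow
      · left; norm_num) with hεn|hεn
    · exact ⟨r, hr, by rw [hεn, mul_one]⟩
    · refine ⟨(r+2)%4, by omega, ?_⟩
      rw [hεn, I_pow_mod, pow_add, Complex.I_sq]; ring
  set Hm : Matrix (Fin 2) (Fin 2) ℂ :=
    !![(u0+v0)/2, (u0-v0)*(-(Complex.I*alpha))/2;
       (u1+v1)/2, (u1-v1)*(-(Complex.I*alpha))/2] with hHm
  have m0 : Hm.mulVec ![1, alpha] 0 = u0 := by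
    rw [hHm]; simp [Matrix.mulVec, dotProduct, Fin.sum_univ_two]
    linear_combination (-(Complex.I*(u0-v0))/2)*hα + (-(u0-v0)/2)*hI
  have m1 : Hm.mulVec ![1, alpha] 1 = u1 := by
    rw [hHm]; simp [Matrix.mulVec, dotProduct, Fin.sum_univ_two]
    linear_combination (-(Complex.I*(u1-v1))/2)*hα + (-(u1-v1)/2)*hI
  have m2 : Hm.mulVec ![1, -alpha] 0 = v0 := by
    rw [hHm]; simp [Matrix.mulVec, dotProduct, Fin.sum_univ_two]
    linear_combination ((Complex.I*(u0-v0))/2)*hα + ((u0-v0)/2)*hI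
  have m3 : Hm.mulVec ![1, -alpha] 1 = v1 := by
    rw [hHm]; simp [Matrix.mulVec, dotProduct, Fin.sum_univ_two]
    linear_combination ((Complex.I*(u1-v1))/2)*hα + ((u1-v1)/2)*hI
  refine ⟨Hm, s₀^n, r', ?_, pow_ne_zero _ hs₀0, hr', ?_⟩
  · have hT : Hm.transpose = !![(u0+v0)/2, (u1+v1)/2;
        (u0-v0)*(-(Complex.I*alpha))/2, (u1-v1)*(-(Complex.I*alpha))/2] := by
      rw [hHm]; ext i j; fin_cases i <;> fin_cases j <;> rfl
    rw [hT, hHm, Matrix.mul_fin_two, Matrix.one_fin_two]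
    ext i j
    fin_cases i <;> fin_cases j <;>
      simp [Matrix.cons_val_zero, Matrix.cons_val_one]
    · linear_combination (1/4)*g1 + (1/2)*g3 + (1/4)*g2
    · linear_combination (-(Complex.I*alpha)/4)*g1 + ((Complex.I*alpha)/4)*g2
    · linear_combination (-(Complex.I*alpha)/4)*g1 + ((Complex.I*alpha)/4)*g2
    · linear_combination ((Complex.I^2*alpha^2)/4)*(g1 + g2 - 2*g3) + (Complex.I^3)*hα + (Complex.I^2-1)*hI
  · intro k hk
    rw [hf k hk, m0, m1, m2, m3]
    have hsplit : s₀^(n-k) * s₀^k = s₀^n := by rw [← pow_add, Nat.sub_add_cancel hk]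
    have t1 : s₀^n * (u0^(n-k) * u1^k) = a₀^(n-k) * b₀^k := by
      rw [hu0, hu1, div_pow, div_pow, ← hsplit]
      field_simp
    have t2 : s₀^n * (v0^(n-k) * v1^k) = (-ε)^n * (p^(n-k) * q^k) := by
      have h' : (-ε*p/s₀)^(n-k) * (-ε*q/s₀)^k
          = ((-ε)^(n-k)*(-ε)^k) * (p^(n-k)*q^k) / (s₀^(n-k)*s₀^k) := by
        rw [div_pow, div_pow, mul_pow, mul_pow]; ring
      rw [hv0, hv1, h', ← pow_add (-ε), Nat.sub_add_cancel hk, hsplit]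
      field_simp
    have t3 : a₁^(n-k) * b₁^k = Complex.I^r * (p^(n-k) * q^k) := by
      have hz : ζ^(n-k) * ζ^k = ζ^n := by rw [← pow_add, Nat.sub_add_cancel hk]
      rw [hζ1, hζ2, mul_pow, mul_pow, ← hζn]
      linear_combination (p^(n-k)*q^k) * hz
    linear_combination -t1 + t3 - Complex.I^r' * t2 - (p^(n-k)*q^k)*hIr
lemma forward (n : ℕ) (hn : 3 ≤ n) (a₀ b₀ a₁ b₁ : ℂ)
    (hli : LinearIndependent ℂ ![(a₀, b₀), (a₁, b₁)]) (f : ℕ → ℂ)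
    (hf : ∀ k ≤ n, f k = a₀ ^ (n - k) * b₀ ^ k + a₁ ^ (n - k) * b₁ ^ k)
    (h : MemA3 n f) :
    ∃ (ε : ℂ) (r : ℕ), (ε = 1 ∨ ε = -1) ∧ r ≤ 3 ∧
      a₁ * ((Real.sqrt 2 : ℂ) * a₀ + ε * Complex.I * b₀) =
        b₁ * (ε * Complex.I * a₀ - (Real.sqrt 2 : ℂ) * b₀) ∧
      a₁ ^ n = Complex.I ^ r * (ε * Complex.I * a₀ - (Real.sqrt 2 : ℂ) * b₀) ^ n ∧
      b₁ ^ n = Complex.I ^ r * ((Real.sqrt 2 : ℂ) * a₀ + ε * Complex.I * b₀) ^ n := by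
  have hs2 := s2_sq
  have hα := alpha_sq
  have hsa := alpha_mul_s2
  have hIα := I_alpha
  have hI := Complex.I_sq
  have hdv : a₀*b₁ - a₁*b₀ ≠ 0 := det_ne a₀ b₀ a₁ b₁ hli
  set s2 : ℂ := ((Real.sqrt 2 : ℝ) : ℂ) with hs2def
  obtain ⟨H, c, r, hH, hc, hr, hfc⟩ := h
  obtain ⟨a, b, e, d, rfl⟩ : ∃ a b e d, H = !![a,b;e,d] := ⟨_,_,_,_, Matrix.eta_fin_two H⟩
  have hT : (!![a,b;e,d]).transpose = !![a,e;b,d] := by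
    ext i j; fin_cases i <;> fin_cases j <;> rfl
  rw [hT, Matrix.mul_fin_two, Matrix.one_fin_two] at hH
  have h00 : a*a + e*e = 1 := by simpa using congrFun (congrFun hH 0) 0
  have h01 : a*b + e*d = 0 := by simpa using congrFun (congrFun hH 0) 1
  have h11 : b*b + d*d = 1 := by simpa using congrFun (congrFun hH 1) 1
  set δ : ℂ := a*d - b*e with hδdef
  have hb2 : b = -(δ*e) := by rw [hδdef]; linear_combination (-b)*h00 + a*h01
  have hd2 : d = δ*a := by rw [hδdef]; linear_combination (-d)*h00 + e*h01
  have hδ2 : δ^2 = 1 := by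
    rw [hδdef]; linear_combination (b^2+d^2)*h00 + h11 - (a*b+e*d)*h01
  have hδ1 : δ = 1 ∨ δ = -1 := by
    rcases mul_eq_zero.mp (show (δ-1)*(δ+1) = 0 by linear_combination hδ2) with h'|h'
    · left; linear_combination h'
    · right; linear_combination h'
  have hδ0 : δ ≠ 0 := by rcases hδ1 with h'|h' <;> rw [h'] <;> norm_num
  set U0 : ℂ := (!![a,b;e,d]).mulVec ![1,alpha] 0 with hU0def
  set U1 : ℂ := (!![a,b;e,d]).mulVec ![1,alpha] 1 with hU1def
  set V0 : ℂ := (!![a,b;e,d]).mulVec ![1,-alpha] 0 with hV0def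
  set V1 : ℂ := (!![a,b;e,d]).mulVec ![1,-alpha] 1 with hV1def
  have hU0 : U0 = a - δ*e*alpha := by
    rw [hU0def]; simp only [Matrix.mulVec, dotProduct, Fin.sum_univ_two, Matrix.cons_val', Matrix.cons_val_zero, Matrix.cons_val_one, Matrix.head_cons, Matrix.head_fin_const, Matrix.empty_val', Matrix.cons_val_fin_one, Matrix.of_apply, mul_one]
    linear_combination alpha*hb2
  have hU1 : U1 = e + δ*a*alpha := by
    rw [hU1def]; simp only [Matrix.mulVec, dotProduct, Fin.sum_univ_two, Matrix.cons_val', Matrix.cons_val_zero, Matrix.cons_val_one, Matrix.head_cons, Matrix.head_fin_const, Matrix.empty_val', Matrix.cons_val_fin_one, Matrix.of_apply, mul_one]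
    linear_combination alpha*hd2
  have hV0 : V0 = a + δ*e*alpha := by
    rw [hV0def]; simp only [Matrix.mulVec, dotProduct, Fin.sum_univ_two, Matrix.cons_val', Matrix.cons_val_zero, Matrix.cons_val_one, Matrix.head_cons, Matrix.head_fin_const, Matrix.empty_val', Matrix.cons_val_fin_one, Matrix.of_apply, mul_one]
    linear_combination (-alpha)*hb2
  have hV1 : V1 = e - δ*a*alpha := by
    rw [hV1def]; simp only [Matrix.mulVec, dotProduct, Fin.sum_univ_two, Matrix.cons_val', Matrix.cons_val_zero, Matrix.cons_val_one, Matrix.head_cons, Matrix.head_fin_const, Matrix.empty_val', Matrix.cons_val_fin_one, Matrix.of_apply, mul_one]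
    linear_combination (-alpha)*hd2
  clear_value δ U0 U1 V0 V1
  have I1 : V0 = -Complex.I*U0 + δ*s2*U1 := by
    rw [hU0, hU1, hV0]
    linear_combination (-a)*hsa + (-(δ*e))*hIα + (-(s2*a*alpha))*hδ2
  have I2 : V1 = -(δ*s2*U0) - Complex.I*U1 := by
    rw [hU0, hU1, hV1]
    linear_combination (-e)*hsa + (-(s2*e*alpha))*hδ2 + (δ*a)*hIα
  have I3 : U0 = -Complex.I*V0 - δ*s2*V1 := by
    linear_combination Complex.I*I1 + δ*s2*I2 - U0*s2^2*hδ2 - U0*hs2 - U0*hI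
  have I4 : U1 = δ*s2*V0 - Complex.I*V1 := by
    linear_combination (-(δ*s2))*I1 + Complex.I*I2 - U1*s2^2*hδ2 - U1*hs2 - U1*hI
  have hdu : U0*V1 - V0*U1 = -(2*δ*alpha) := by
    rw [hU0, hU1, hV0, hV1]
    linear_combination (-(2*δ*alpha))*h00
  have hdune : U0*V1 - V0*U1 ≠ 0 := by
    rw [hdu]
    simp only [neg_ne_zero]
    exact mul_ne_zero (mul_ne_zero two_ne_zero hδ0) alpha_ne
  have hwnz : ¬(U0 = 0 ∧ U1 = 0) := by
    rintro ⟨hh1, hh2⟩; apply hdune; rw [hh1, hh2]; ring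
  have hwnz' : ¬(V0 = 0 ∧ V1 = 0) := by
    rintro ⟨hh1, hh2⟩; apply hdune; rw [hh1, hh2]; ring
  have F : ∀ j k : ℕ, j + k = n →
      a₀^j*b₀^k + a₁^j*b₁^k = c*(U0^j*U1^k) + c*Complex.I^r*(V0^j*V1^k) := by
    intro j k hjk
    have h1 := hf k (by omega)
    have h2 := hfc k (by omega)
    rw [h1, show n - k = j from by omega] at h2
    linear_combination h2
  by_cases h1 : U0*b₀ - a₀*U1 = 0
  · -- v₀ ∥ w₀
    obtain ⟨σ, hσ0, hσ1⟩ := par U0 U1 a₀ b₀ h1 hwnz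
    have h2 : V0*b₁ - a₁*V1 = 0 := by
      by_contra h2
      have h3 : U0*b₁ - a₁*U1 ≠ 0 := by
        intro h3
        apply hdv
        rw [hσ0, hσ1]
        linear_combination σ*h3
      have key := ind3 n (by omega) V0 V1 a₁ b₁ U0 U1 (c*Complex.I^r) (-1) (c - σ^n)
        h2
        (by intro hh; apply hdune; linear_combination -hh)
        (by intro hh; apply h3; linear_combination -hh)
        (by
          intro j k hjk
          have hF := F j k hjk
          rw [hσ0, hσ1] at hF
          have hp : (σ*U0)^j*(σ*U1)^k = σ^n*(U0^j*U1^k) := by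
            rw [mul_pow, mul_pow, ← hjk, pow_add]; ring
          linear_combination hp - hF)
      have := key.2.1; norm_num at this
    obtain ⟨τ, hτ0, hτ1⟩ := par V0 V1 a₁ b₁ h2 hwnz'
    have key2 := ind2 n (by omega) U0 U1 V0 V1 (c - σ^n) (c*Complex.I^r - τ^n) hdune (by
      intro j k hjk
      have hF := F j k hjk
      rw [hσ0, hσ1, hτ0, hτ1] at hF
      have hp : (σ*U0)^j*(σ*U1)^k = σ^n*(U0^j*U1^k) := by
        rw [mul_pow, mul_pow, ← hjk, pow_add]; ring
      have hq : (τ*V0)^j*(τ*V1)^k = τ^n*(V0^j*V1^k) := by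
        rw [mul_pow, mul_pow, ← hjk, pow_add]; ring
      linear_combination hp + hq - hF)
    have hσn : σ^n = c := by linear_combination -key2.1
    have hτn : τ^n = c*Complex.I^r := by linear_combination -key2.2
    have hP : δ*Complex.I*a₀ - s2*b₀ = -(σ*δ)*V0 := by
      rw [hσ0, hσ1]
      linear_combination (σ*δ)*I1 + (σ*s2*U1)*hδ2
    have hQ2 : s2*a₀ + δ*Complex.I*b₀ = -(σ*δ)*V1 := by
      rw [hσ0, hσ1]
      linear_combination (σ*δ)*I2 - (σ*s2*U0)*hδ2
    obtain ⟨r', hr', hIr⟩ : ∃ r', r' ≤ 3 ∧ Complex.I^r' * (-δ)^n = Complex.I^r := by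
      rcases (show (-δ)^n = 1 ∨ (-δ)^n = -1 by
        rcases hδ1 with h'|h'
        · rw [h']
          rcases Nat.even_or_odd n with hh|hh
          · left; simpa using hh.neg_one_pow
          · right; simpa using hh.neg_one_pow
        · rw [h']; left; norm_num) with hεn|hεn
      · exact ⟨r, hr, by rw [hεn, mul_one]⟩
      · refine ⟨(r+2)%4, by omega, ?_⟩
        rw [hεn, I_pow_mod, pow_add, Complex.I_sq]; ring
    refine ⟨δ, r', hδ1, hr', ?_, ?_, ?_⟩
    · rw [hτ0, hτ1]
      linear_combination (τ*V0)*hQ2 - (τ*V1)*hP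
    · rw [hP, hτ0]
      have hsc : τ^n = Complex.I^r' * (-(σ*δ))^n := by
        have h' : (-(σ*δ))^n = (-δ)^n * σ^n := by rw [← mul_pow]; congr 1; ring
        rw [h', hτn, ← hσn]
        linear_combination (-(σ^n))*hIr
      rw [mul_pow τ V0, mul_pow (-(σ*δ)) V0]
      linear_combination (V0^n) * hsc
    · rw [hQ2, hτ1]
      have hsc : τ^n = Complex.I^r' * (-(σ*δ))^n := by
        have h' : (-(σ*δ))^n = (-δ)^n * σ^n := by rw [← mul_pow]; congr 1; ring
        rw [h', hτn, ← hσn]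
        linear_combination (-(σ^n))*hIr
      rw [mul_pow τ V1, mul_pow (-(σ*δ)) V1]
      linear_combination (V1^n) * hsc
  · -- v₀ ∦ w₀, so v₁ ∥ w₀ and v₀ ∥ w₁
    have h2 : U0*b₁ - a₁*U1 = 0 := by
      by_contra h2
      by_cases h3 : V0*b₀ - a₀*V1 = 0
      · obtain ⟨τ, hτ0, hτ1⟩ := par V0 V1 a₀ b₀ h3 hwnz'
        have h4 : a₁*V1 - V0*b₁ ≠ 0 := by
          intro h4
          apply hdv
          rw [hτ0, hτ1]
          linear_combination (-τ)*h4
        have key := ind3 n (by omega) U0 U1 a₁ b₁ V0 V1 c (-1) (c*Complex.I^r - τ^n)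
          h2 hdune h4
          (by
            intro j k hjk
            have hF := F j k hjk
            rw [hτ0, hτ1] at hF
            have hq : (τ*V0)^j*(τ*V1)^k = τ^n*(V0^j*V1^k) := by
              rw [mul_pow, mul_pow, ← hjk, pow_add]; ring
            linear_combination hq - hF)
        exact hc key.1
      · by_cases h4 : V0*b₁ - a₁*V1 = 0
        · obtain ⟨τ, hτ0, hτ1⟩ := par V0 V1 a₁ b₁ h4 hwnz'
          have key := ind3 n (by omega) U0 U1 a₀ b₀ V0 V1 c (-1) (c*Complex.I^r - τ^n)
            h1 hdune
            (by intro hh; apply h3; linear_combination -hh)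
            (by
              intro j k hjk
              have hF := F j k hjk
              rw [hτ0, hτ1] at hF
              have hq : (τ*V0)^j*(τ*V1)^k = τ^n*(V0^j*V1^k) := by
                rw [mul_pow, mul_pow, ← hjk, pow_add]; ring
              linear_combination hq - hF)
          exact hc key.1
        · have key := ind4 n hn U0 U1 V0 V1 a₀ b₀ a₁ b₁ c (c*Complex.I^r) (-1) (-1)
            hdune h1 h2 h3 h4 hdv
            (by intro j k hjk; linear_combination -(F j k hjk))
          exact hc key.1
    obtain ⟨σ, hσ0, hσ1⟩ := par U0 U1 a₁ b₁ h2 hwnz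
    have h3 : V0*b₀ - a₀*V1 = 0 := by
      by_contra h3
      have key := ind3 n (by omega) V0 V1 a₀ b₀ U0 U1 (c*Complex.I^r) (-1) (c - σ^n)
        h3
        (by intro hh; apply hdune; linear_combination -hh)
        (by intro hh; apply h1; linear_combination -hh)
        (by
          intro j k hjk
          have hF := F j k hjk
          rw [hσ0, hσ1] at hF
          have hp : (σ*U0)^j*(σ*U1)^k = σ^n*(U0^j*U1^k) := by
            rw [mul_pow, mul_pow, ← hjk, pow_add]; ring
          linear_combination hp - hF)
      have := key.2.1; norm_num at this
    obtain ⟨τ, hτ0, hτ1⟩ := par V0 V1 a₀ b₀ h3 hwnz'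
    have key2 := ind2 n (by omega) U0 U1 V0 V1 (c - σ^n) (c*Complex.I^r - τ^n) hdune (by
      intro j k hjk
      have hF := F j k hjk
      rw [hσ0, hσ1, hτ0, hτ1] at hF
      have hp : (σ*U0)^j*(σ*U1)^k = σ^n*(U0^j*U1^k) := by
        rw [mul_pow, mul_pow, ← hjk, pow_add]; ring
      have hq : (τ*V0)^j*(τ*V1)^k = τ^n*(V0^j*V1^k) := by
        rw [mul_pow, mul_pow, ← hjk, pow_add]; ring
      linear_combination hp + hq - hF)
    have hσn : σ^n = c := by linear_combination -key2.1
    have hτn : τ^n = c*Complex.I^r := by linear_combination -key2.2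
    have hP : (-δ)*Complex.I*a₀ - s2*b₀ = (τ*δ)*U0 := by
      rw [hτ0, hτ1]
      linear_combination (-(τ*δ))*I3 + (τ*s2*V1)*hδ2
    have hQ2 : s2*a₀ + (-δ)*Complex.I*b₀ = (τ*δ)*U1 := by
      rw [hτ0, hτ1]
      linear_combination (-(τ*δ))*I4 + (-(τ*s2*V0))*hδ2
    obtain ⟨r', hr', hIr⟩ : ∃ r', r' ≤ 3 ∧ Complex.I^r' * δ^n * Complex.I^r = 1 := by
      rcases (show δ^n = 1 ∨ δ^n = -1 by
        rcases hδ1 with h'|h'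
        · rw [h']; left; norm_num
        · rw [h']
          rcases Nat.even_or_odd n with hh|hh
          · left; simpa using hh.neg_one_pow
          · right; simpa using hh.neg_one_pow) with hεn|hεn
      · refine ⟨(4-r)%4, by omega, ?_⟩
        rw [hεn, I_pow_mod, mul_one, ← pow_add, show 4-r+r = 4 from by omega]
        exact Complex.I_pow_four
      · refine ⟨(6-r)%4, by omega, ?_⟩
        rw [hεn, I_pow_mod]
        rw [show Complex.I^(6-r) * -1 * Complex.I^r = -(Complex.I^(6-r+r)) from by rw [pow_add]; ring]
        rw [show 6-r+r = 6 from by omega, show (6:ℕ) = 2+4 from rfl, pow_add, Complex.I_pow_four, Complex.I_sq]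
        norm_num
    refine ⟨-δ, r', by rcases hδ1 with h'|h' <;> rw [h'] <;> norm_num, hr', ?_, ?_, ?_⟩
    · rw [hσ0, hσ1]
      linear_combination (σ*U0)*hQ2 - (σ*U1)*hP
    · rw [hP, hσ0]
      have hsc : σ^n = Complex.I^r' * (τ*δ)^n := by
        rw [mul_pow, hσn, hτn]
        linear_combination (-c)*hIr
      rw [mul_pow σ U0, mul_pow (τ*δ) U0]
      linear_combination (U0^n) * hsc
    · rw [hQ2, hσ1]
      have hsc : σ^n = Complex.I^r' * (τ*δ)^n := by
        rw [mul_pow, hσn, hτn]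
        linear_combination (-c)*hIr
      rw [mul_pow σ U1, mul_pow (τ*δ) U1]
      linear_combination (U1^n) * hsc

/-- **Characterization of `𝒜₃`.**
Let `f = v₀^{⊗n} + v₁^{⊗n}` with `v₀ = (a₀, b₀)`, `v₁ = (a₁, b₁)` linearly independent and
`n ≥ 3`. Then `f ∈ 𝒜₃` iff there exist `ε ∈ {1, −1}` and `r ∈ {0,1,2,3}` such that
`a₁ (√2 a₀ + ε i b₀) = b₁ (ε i a₀ − √2 b₀)`, `a₁ⁿ = i^r (ε i a₀ − √2 b₀)ⁿ`, and
`b₁ⁿ = i^r (√2 a₀ + ε i b₀)ⁿ`. -/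
theorem stmt_15 (n : ℕ) (hn : 3 ≤ n) (a₀ b₀ a₁ b₁ : ℂ)
    (hli : LinearIndependent ℂ ![(a₀, b₀), (a₁, b₁)]) (f : ℕ → ℂ)
    (hf : ∀ k ≤ n, f k = a₀ ^ (n - k) * b₀ ^ k + a₁ ^ (n - k) * b₁ ^ k) :
    MemA3 n f ↔
      ∃ (ε : ℂ) (r : ℕ), (ε = 1 ∨ ε = -1) ∧ r ≤ 3 ∧
        a₁ * ((Real.sqrt 2 : ℂ) * a₀ + ε * Complex.I * b₀) =
          b₁ * (ε * Complex.I * a₀ - (Real.sqrt 2 : ℂ) * b₀) ∧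
        a₁ ^ n = Complex.I ^ r * (ε * Complex.I * a₀ - (Real.sqrt 2 : ℂ) * b₀) ^ n ∧
        b₁ ^ n = Complex.I ^ r * ((Real.sqrt 2 : ℂ) * a₀ + ε * Complex.I * b₀) ^ n := by
  constructor
  · intro h
    exact forward n hn a₀ b₀ a₁ b₁ hli f hf h
  · rintro ⟨ε, r, hε, hr, e1, e2, e3⟩
    exact backward n hn a₀ b₀ a₁ b₁ (det_ne a₀ b₀ a₁ b₁ hli) f hf ε r hε hr e1 e2 e3
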